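/- Let (ξ_i)_{i≥1} be i.i.d. pairs ξ_i=(ξ^c_i, ξ^m_i) with E(ξ^c+ξ^m) ≤ 1, π^{*n}_{k,ℓ} the n-fold convolution of their joint law, T^c_k = inf{n : Σ_{i≤n} ξ^c_i − n = −k}. Then P(T^c_k = n, Σ_{i=1}^n ξ^m_i = k−1) = (k/n) π^{*n}_{n−k, k−1} for all 1 ≤ k ≤ n. -/

import Mathlib

set_option autoImplicit false

open MeasureTheory ProbabilityTheory Filter Finset

private lemma cycle_count (n k : ℕ) (hk1 : 1 ≤ k) (hkn : k ≤ n) (c : ℕ → ℕ)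
    (htot : ∑ i ∈ Finset.range n, c i = n - k) :
    ((Finset.range n).filter (fun r => ∀ m < n,
      (∑ i ∈ Finset.range m, (c ((r + i) % n) : ℤ)) - m ≠ -(k : ℤ))).card = k := by
  classical
  have hn : 0 < n := lt_of_lt_of_le hk1 hkn
  set S : ℕ → ℤ := fun m => ∑ i ∈ Finset.range m, ((c (i % n) : ℤ) - 1) with hSdef
  have hstep : ∀ m, S (m + 1) = S m + ((c (m % n) : ℤ) - 1) := fun m =>
    Finset.sum_range_succ _ m
  have hstep' : ∀ m, S m - 1 ≤ S (m + 1) := by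
    intro m; rw [hstep]
    have : (0:ℤ) ≤ (c (m % n) : ℤ) := Int.natCast_nonneg _
    linarith
  have hS0 : S 0 = 0 := by simp [hSdef]
  have hsum : ∀ m, S m = (∑ i ∈ Finset.range m, (c (i % n) : ℤ)) - m := by
    intro m
    show ∑ i ∈ Finset.range m, ((c (i % n) : ℤ) - 1) = _
    rw [Finset.sum_sub_distrib]; simp
  have hSn : S n = -(k : ℤ) := by
    rw [hsum]
    have h1 : ∑ i ∈ Finset.range n, (c (i % n) : ℤ) = ∑ i ∈ Finset.range n, (c i : ℤ) :=
      Finset.sum_congr rfl (fun i hi => by rw [Nat.mod_eq_of_lt (Finset.mem_range.1 hi)])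
    rw [h1, ← Nat.cast_sum, htot]
    omega
  have hper : ∀ m, S (m + n) = S m - k := by
    intro m; induction m with
    | zero => rw [Nat.zero_add, hSn, hS0]; ring
    | succ m ih =>
      have e : m + 1 + n = (m + n) + 1 := by ring
      rw [e, hstep (m + n), ih, hstep m, Nat.add_mod_right m n]
      ring
  have hrot : ∀ r m, (∑ i ∈ Finset.range m, (c ((r + i) % n) : ℤ)) - m = S (r + m) - S r := by
    intro r m; induction m with
    | zero => simp
    | succ m ih =>
      rw [Finset.sum_range_succ]
      have e : r + (m + 1) = (r + m) + 1 := rfl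
      rw [e, hstep (r + m)]
      push_cast
      push_cast at ih
      linarith
  -- convert ≠ to >
  have hgt : ∀ r, (∀ m < n, S (r + m) - S r ≠ -(k : ℤ)) ↔
      (∀ m < n, -(k : ℤ) < S (r + m) - S r) := by
    intro r
    constructor
    · intro h m
      induction m with
      | zero => intro _; simp; omega
      | succ m ih =>
        intro hm
        have h1 := ih (by omega)
        have h2 := hstep' (r + m)
        have h3 : S ((r + m) + 1) - S r ≠ -(k:ℤ) := h (m + 1) hm
        show -(k:ℤ) < S ((r + m) + 1) - S r
        omega
    · intro h m hm; exact (h m hm).ne'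
  -- minimum
  have hTne : ((Finset.range n).image S).Nonempty :=
    (Finset.nonempty_range_iff.2 hn.ne').image _
  set M := ((Finset.range n).image S).min' hTne with hMdef
  have hMle : ∀ j < n, M ≤ S j := fun j hj =>
    Finset.min'_le _ _ (Finset.mem_image_of_mem S (Finset.mem_range.2 hj))
  obtain ⟨j0, hj0n, hj0⟩ : ∃ j < n, S j = M := by
    obtain ⟨x, hx, he⟩ := Finset.mem_image.1 (Finset.min'_mem _ hTne)
    exact ⟨x, Finset.mem_range.1 hx, he⟩
  have hM1k : M ≤ 1 - k := by
    have h1 : M ≤ S (n - 1) := hMle _ (by omega)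
    have h2 := hstep' (n - 1)
    have e : (n - 1) + 1 = n := by omega
    rw [e, hSn] at h2
    omega
  -- characterization
  have hchar : ∀ r < n, (∀ m < n, -(k : ℤ) < S (r + m) - S r) ↔
      ((∀ j < r, S r < S j) ∧ S r < M + k) := by
    intro r hr
    constructor
    · intro h
      have ha : ∀ j < r, S r < S j := by
        intro j hj
        have hm : j + n - r < n := by omega
        have h5 := h (j + n - r) hm
        have e : r + (j + n - r) = j + n := by omega
        rw [e, hper j] at h5; omega
      refine ⟨ha, ?_⟩
      rcases Nat.lt_or_ge j0 r with hjr | hjr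
      · have h6 := ha j0 hjr
        have h7 : (0:ℤ) ≤ (k:ℤ) := Int.natCast_nonneg k
        omega
      · have hm : j0 - r < n := by omega
        have h5 := h (j0 - r) hm
        have e : r + (j0 - r) = j0 := by omega
        rw [e, hj0] at h5; omega
    · rintro ⟨h1, h2⟩ m hm
      rcases Nat.lt_or_ge (r + m) n with hrm | hrm
      · have := hMle (r + m) hrm; omega
      · have hj : r + m - n < r := by omega
        have e : r + m = (r + m - n) + n := by omega
        have h4 := hper (r + m - n)
        have h3 := h1 (r + m - n) hj
        rw [e, h4]; omega
  -- rewrite filter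
  have hfe : ((Finset.range n).filter (fun r => ∀ m < n,
      (∑ i ∈ Finset.range m, (c ((r + i) % n) : ℤ)) - m ≠ -(k : ℤ)))
      = (Finset.range n).filter (fun r => (∀ j < r, S r < S j) ∧ S r < M + k) := by
    apply Finset.filter_congr
    intro r hr
    have hr' := Finset.mem_range.1 hr
    constructor
    · intro h
      exact (hchar r hr').1 ((hgt r).1 (fun m hm => by rw [← hrot r m]; exact h m hm))
    · intro h m hm
      rw [hrot r m]
      exact ((hgt r).2 ((hchar r hr').2 h)) m hm
  rw [hfe]
  have hcard : ((Finset.range n).filter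
      (fun r => (∀ j < r, S r < S j) ∧ S r < M + k)).card
      = (Finset.Icc M (M + k - 1)).card := by
    apply Finset.card_bij (fun r _ => S r)
    · intro r hr
      obtain ⟨hrn, h1, h2⟩ := Finset.mem_filter.1 hr
      have := hMle r (Finset.mem_range.1 hrn)
      rw [Finset.mem_Icc]; omega
    · intro r1 h1 r2 h2 he
      obtain ⟨hrn1, ha1, _⟩ := Finset.mem_filter.1 h1
      obtain ⟨hrn2, ha2, _⟩ := Finset.mem_filter.1 h2
      rcases lt_trichotomy r1 r2 with h | h | h
      · have := ha2 r1 h; omega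
      · exact h
      · have := ha1 r2 h; omega
    · intro v hv
      rw [Finset.mem_Icc] at hv
      have hQ : S j0 ≤ v := by omega
      set r := sInf {j | S j ≤ v} with hrdef
      have hne : {j | S j ≤ v}.Nonempty := ⟨j0, hQ⟩
      have hrQ : S r ≤ v := Nat.sInf_mem hne
      have hmin : ∀ j < r, ¬ (S j ≤ v) := fun j hj => Nat.notMem_of_lt_sInf hj
      have hrj0 : r ≤ j0 := Nat.sInf_le hQ
      have hrn : r < n := lt_of_le_of_lt hrj0 hj0n
      have hvr : S r = v := by
        rcases Nat.eq_zero_or_eq_succ_pred r with h0 | hs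
        · rw [h0] at hrQ ⊢
          rw [hS0] at hrQ ⊢
          omega
        · set t := r - 1 with ht
          have hrt : r = t + 1 := by omega
          have h5 := hmin t (by omega)
          have h6 := hstep' t
          rw [hrt] at hrQ ⊢
          omega
      refine ⟨r, Finset.mem_filter.2 ⟨Finset.mem_range.2 hrn, ?_, ?_⟩, hvr⟩
      · intro j hj
        have := hmin j hj
        omega
      · omega
  rw [hcard, Int.card_Icc]
  omega

private lemma joint_prob {Ω : Type*} [MeasurableSpace Ω] (P : Measure Ω)
    (ξ : ℕ → Ω → ℕ × ℕ) (hmeas : ∀ i, Measurable (ξ i))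
    (hindep : iIndepFun ξ P)
    (hident : ∀ i, IdentDistrib (ξ i) (ξ 0) P P)
    (n : ℕ) (C : Set (Fin n → ℕ × ℕ)) (g : Fin n → ℕ) (hg : Function.Injective g) :
    P {ω | (fun i => ξ (g i) ω) ∈ C}
      = ∑' v : C, ∏ i : Fin n, P {ω | ξ 0 ω = (v : Fin n → ℕ × ℕ) i} := by
  classical
  have hdecomp : {ω | (fun i => ξ (g i) ω) ∈ C}
      = ⋃ v : C, ⋂ i : Fin n, ξ (g i) ⁻¹' {(v : Fin n → ℕ × ℕ) i} := by
    ext ω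
    simp only [Set.mem_setOf_eq, Set.mem_iUnion, Set.mem_iInter, Set.mem_preimage,
      Set.mem_singleton_iff]
    constructor
    · intro h; exact ⟨⟨_, h⟩, fun i => rfl⟩
    · rintro ⟨⟨v, hv⟩, h⟩
      have : (fun i => ξ (g i) ω) = v := funext h
      rwa [this]
  have hdisj : Pairwise (Function.onFun Disjoint
      (fun v : C => ⋂ i : Fin n, ξ (g i) ⁻¹' {(v : Fin n → ℕ × ℕ) i})) := by
    intro v w hvw
    rw [Function.onFun, Set.disjoint_left]
    intro ω h1 h2
    simp only [Set.mem_iInter, Set.mem_preimage, Set.mem_singleton_iff] at h1 h2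
    exact hvw (Subtype.ext (funext fun i => (h1 i).symm.trans (h2 i)))
  have hmeas' : ∀ v : C, MeasurableSet (⋂ i : Fin n, ξ (g i) ⁻¹' {(v : Fin n → ℕ × ℕ) i}) :=
    fun v => MeasurableSet.iInter fun i => hmeas (g i) (measurableSet_singleton _)
  rw [hdecomp, measure_iUnion hdisj hmeas']
  refine tsum_congr fun v => ?_
  set w : Fin n → ℕ × ℕ := (v : Fin n → ℕ × ℕ) with hw
  set t : ℕ → Set (ℕ × ℕ) := fun j => if h : ∃ i, g i = j then {w h.choose} else Set.univ with ht
  have htg : ∀ i, t (g i) = {w i} := by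
    intro i
    have hex : ∃ i', g i' = g i := ⟨i, rfl⟩
    have : hex.choose = i := hg hex.choose_spec
    simp only [ht, dif_pos hex, this]
  have hset : (⋂ i : Fin n, ξ (g i) ⁻¹' {w i})
      = ⋂ j ∈ Finset.image g Finset.univ, ξ j ⁻¹' t j := by
    ext ω
    simp only [Set.mem_iInter, Set.mem_preimage, Finset.mem_image, Finset.mem_univ, true_and]
    constructor
    · intro h j hj
      obtain ⟨i, rfl⟩ := hj
      rw [htg i]; exact h i
    · intro h i
      have := h (g i) ⟨i, rfl⟩
      rwa [htg i] at this
  have htmeas : ∀ j, MeasurableSet (t j) := by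
    intro j
    simp only [ht]
    split_ifs
    · exact measurableSet_singleton _
    · exact MeasurableSet.univ
  rw [hset, hindep.meas_biInter (fun j _ => ⟨t j, htmeas j, rfl⟩),
    Finset.prod_image (fun i _ j _ h => hg h)]
  refine Finset.prod_congr rfl fun i _ => ?_
  rw [htg i]
  exact (hident (g i)).measure_mem_eq (measurableSet_singleton (w i))

private lemma natSInf_eq {Q : Set ℕ} {n : ℕ} (hn : n ≠ 0) :
    sInf Q = n ↔ n ∈ Q ∧ ∀ m < n, m ∉ Q := by
  constructor
  · intro h
    have hne : Q.Nonempty := by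
      by_contra hQ
      rw [Set.not_nonempty_iff_eq_empty] at hQ
      rw [hQ, Nat.sInf_empty] at h
      exact hn h.symm
    exact ⟨h ▸ Nat.sInf_mem hne, fun m hm => Nat.notMem_of_lt_sInf (h ▸ hm)⟩
  · rintro ⟨h1, h2⟩
    refine le_antisymm (Nat.sInf_le h1) ?_
    by_contra hlt
    push_neg at hlt
    exact h2 _ hlt (Nat.sInf_mem ⟨n, h1⟩)

private lemma rot_sum (n : ℕ) (hn : 0 < n) (r : ℕ) (hr : r ≤ n) (f : ℕ → ℕ) :
    ∑ i ∈ Finset.range n, f ((r + i) % n) = ∑ i ∈ Finset.range n, f i := by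
  apply Finset.sum_nbij' (fun i => (r + i) % n) (fun j => ((n - r) + j) % n)
  · intro a _; exact Finset.mem_range.2 (Nat.mod_lt _ hn)
  · intro a _; exact Finset.mem_range.2 (Nat.mod_lt _ hn)
  · intro a ha
    have ha' := Finset.mem_range.1 ha
    rw [Nat.add_mod_mod]
    have e : n - r + (r + a) = n + a := by omega
    rw [e, Nat.add_mod_left, Nat.mod_eq_of_lt ha']
  · intro a ha
    have ha' := Finset.mem_range.1 ha
    rw [Nat.add_mod_mod]
    have e : r + (n - r + a) = n + a := by omega
    rw [e, Nat.add_mod_left, Nat.mod_eq_of_lt ha']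
  · intro a _; rfl

/-- `P(T^c_k = n, ξ^m_1 + ... + ξ^m_n = k - 1) = (k/n) π^{*n}_{n-k, k-1}`: the probability
that the first `k` allelic clusters have total size `n` and generate exactly `k - 1`
mutants. -/
theorem prob_Tck_eq_n_and_mutants
    {Ω : Type*} [MeasureSpace Ω] (P : Measure Ω := volume) [IsProbabilityMeasure P]
    (ξ : ℕ → Ω → ℕ × ℕ) (hmeas : ∀ i, Measurable (ξ i))
    (hindep : iIndepFun ξ P)
    (hident : ∀ i, IdentDistrib (ξ i) (ξ 0) P P)
    (hint : Integrable (fun ω => (((ξ 0 ω).1 : ℝ) + ((ξ 0 ω).2 : ℝ))) P)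
    (hmean : (∫ ω, (((ξ 0 ω).1 : ℝ) + ((ξ 0 ω).2 : ℝ)) ∂P) ≤ 1)
    (Tc : ℕ → Ω → ℕ)
    (hTc : ∀ j ω, Tc j ω = sInf {m : ℕ |
      (∑ i ∈ Finset.range m, ((ξ i ω).1 : ℤ)) - m = -(j : ℤ)})
    (n k : ℕ) (hk1 : 1 ≤ k) (hkn : k ≤ n) :
    P {ω | Tc k ω = n ∧ (∑ i ∈ Finset.range n, (ξ i ω).2) = k - 1}
      = ((k : ENNReal) / n) *
        P {ω | (∑ i ∈ Finset.range n, (ξ i ω).1) = n - k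
             ∧ (∑ i ∈ Finset.range n, (ξ i ω).2) = k - 1} := by
  classical
  have hn : 0 < n := lt_of_lt_of_le hk1 hkn
  have hn0 : n ≠ 0 := hn.ne'
  set e : (Fin n → ℕ × ℕ) → ℕ → ℕ × ℕ :=
    fun v j => if h : j < n then v ⟨j, h⟩ else (0, 0) with he
  set C : Set (Fin n → ℕ × ℕ) := {v |
      (∀ m < n, (∑ i ∈ Finset.range m, ((e v i).1 : ℤ)) - (m : ℤ) ≠ -(k : ℤ))
      ∧ (∑ i ∈ Finset.range n, (e v i).1) = n - k
      ∧ (∑ i ∈ Finset.range n, (e v i).2) = k - 1} with hC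
  set A : ℕ → Set Ω :=
    fun r => {ω | (fun i : Fin n => ξ ((r + (i : ℕ)) % n) ω) ∈ C} with hA
  -- membership characterization of A r
  have hAmem : ∀ r ω, ω ∈ A r ↔
      ((∀ m < n, (∑ i ∈ Finset.range m, ((ξ ((r + i) % n) ω).1 : ℤ)) - (m : ℤ) ≠ -(k : ℤ))
      ∧ (∑ i ∈ Finset.range n, (ξ ((r + i) % n) ω).1) = n - k
      ∧ (∑ i ∈ Finset.range n, (ξ ((r + i) % n) ω).2) = k - 1) := by
    intro r ω
    have hev : ∀ j, j < n → e (fun i : Fin n => ξ ((r + (i : ℕ)) % n) ω) j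
        = ξ ((r + j) % n) ω := by
      intro j hj; simp only [he, dif_pos hj]
    have h1 : ∀ m, m ≤ n →
        (∑ i ∈ Finset.range m, ((e (fun i : Fin n => ξ ((r + (i : ℕ)) % n) ω) i).1 : ℤ))
        = ∑ i ∈ Finset.range m, ((ξ ((r + i) % n) ω).1 : ℤ) :=
      fun m hm => Finset.sum_congr rfl fun i hi => by
        rw [hev i (lt_of_lt_of_le (Finset.mem_range.1 hi) hm)]
    have h2 : (∑ i ∈ Finset.range n, (e (fun i : Fin n => ξ ((r + (i : ℕ)) % n) ω) i).1)
        = ∑ i ∈ Finset.range n, (ξ ((r + i) % n) ω).1 :=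
      Finset.sum_congr rfl fun i hi => by rw [hev i (Finset.mem_range.1 hi)]
    have h3 : (∑ i ∈ Finset.range n, (e (fun i : Fin n => ξ ((r + (i : ℕ)) % n) ω) i).2)
        = ∑ i ∈ Finset.range n, (ξ ((r + i) % n) ω).2 :=
      Finset.sum_congr rfl fun i hi => by rw [hev i (Finset.mem_range.1 hi)]
    constructor
    · rintro ⟨ha, hb, hc⟩
      exact ⟨fun m hm => by rw [← h1 m hm.le]; exact ha m hm,
        by rw [← h2]; exact hb, by rw [← h3]; exact hc⟩
    · rintro ⟨ha, hb, hc⟩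
      exact ⟨fun m hm => by rw [h1 m hm.le]; exact ha m hm,
        by rw [h2]; exact hb, by rw [h3]; exact hc⟩
  -- LHS event equals A 0
  have hA0 : {ω | Tc k ω = n ∧ (∑ i ∈ Finset.range n, (ξ i ω).2) = k - 1} = A 0 := by
    ext ω
    simp only [Set.mem_setOf_eq]
    rw [hTc k ω, natSInf_eq hn0, hAmem 0 ω]
    have hs1 : ∀ m, m ≤ n → ∑ i ∈ Finset.range m, ((ξ ((0 + i) % n) ω).1 : ℤ)
        = ∑ i ∈ Finset.range m, ((ξ i ω).1 : ℤ) :=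
      fun m hm => Finset.sum_congr rfl fun i hi => by
        rw [Nat.zero_add, Nat.mod_eq_of_lt (lt_of_lt_of_le (Finset.mem_range.1 hi) hm)]
    have hs2 : ∑ i ∈ Finset.range n, (ξ ((0 + i) % n) ω).1
        = ∑ i ∈ Finset.range n, (ξ i ω).1 :=
      Finset.sum_congr rfl fun i hi => by
        rw [Nat.zero_add, Nat.mod_eq_of_lt (Finset.mem_range.1 hi)]
    have hs3 : ∑ i ∈ Finset.range n, (ξ ((0 + i) % n) ω).2
        = ∑ i ∈ Finset.range n, (ξ i ω).2 :=
      Finset.sum_congr rfl fun i hi => by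
        rw [Nat.zero_add, Nat.mod_eq_of_lt (Finset.mem_range.1 hi)]
    have hcast : ((∑ i ∈ Finset.range n, (ξ i ω).1 : ℕ) : ℤ)
        = ∑ i ∈ Finset.range n, ((ξ i ω).1 : ℤ) := by push_cast; rfl
    constructor
    · rintro ⟨⟨hmemQ, hnot⟩, hmut⟩
      simp only [Set.mem_setOf_eq] at hmemQ hnot
      refine ⟨fun m hm => by rw [hs1 m hm.le]; exact hnot m hm, ?_, by rw [hs3]; exact hmut⟩
      rw [hs2]
      omega
    · rintro ⟨ha, hb, hc⟩
      rw [hs2] at hb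
      rw [hs3] at hc
      refine ⟨⟨?_, fun m hm => ?_⟩, hc⟩
      · simp only [Set.mem_setOf_eq]; omega
      · simp only [Set.mem_setOf_eq]
        rw [← hs1 m hm.le]
        exact ha m hm
  -- measurability
  have hCmeasAll : ∀ D : Set (Fin n → ℕ × ℕ), MeasurableSet D := by
    intro D
    have hD : D = ⋃ v ∈ D, {v} := by simp
    rw [hD]
    refine MeasurableSet.biUnion (Set.to_countable D) fun v _ => ?_
    have hv : ({v} : Set (Fin n → ℕ × ℕ))
        = ⋂ i, (fun w : Fin n → ℕ × ℕ => w i) ⁻¹' {v i} := by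
      ext w
      simp [Set.mem_iInter, funext_iff]
    rw [hv]
    exact MeasurableSet.iInter fun i =>
      (measurable_pi_apply i) (measurableSet_singleton _)
  have hFmeas : ∀ r : ℕ, Measurable (fun ω => fun i : Fin n => ξ ((r + (i : ℕ)) % n) ω) :=
    fun r => measurable_pi_lambda _ fun i => hmeas _
  have hAmeas : ∀ r, MeasurableSet (A r) := fun r => (hFmeas r) (hCmeasAll C)
  set B : Set Ω := {ω | (∑ i ∈ Finset.range n, (ξ i ω).1) = n - k
      ∧ (∑ i ∈ Finset.range n, (ξ i ω).2) = k - 1} with hB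
  have hs1meas : Measurable fun ω => ∑ i ∈ Finset.range n, (ξ i ω).1 :=
    Finset.measurable_sum _ fun i _ => (measurable_fst.comp (hmeas i))
  have hs2meas : Measurable fun ω => ∑ i ∈ Finset.range n, (ξ i ω).2 :=
    Finset.measurable_sum _ fun i _ => (measurable_snd.comp (hmeas i))
  have hBmeas : MeasurableSet B := by
    rw [hB, Set.setOf_and]
    exact (hs1meas (measurableSet_singleton _)).inter (hs2meas (measurableSet_singleton _))
  -- pointwise counting
  have hpoint : ∀ ω, ∑ r ∈ Finset.range n, (A r).indicator (fun _ => (1 : ENNReal)) ω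
      = (k : ENNReal) * B.indicator (fun _ => 1) ω := by
    intro ω
    by_cases hω : ω ∈ B
    · rw [Set.indicator_of_mem hω, mul_one]
      obtain ⟨htot, hmut⟩ := hω
      have hmemA : ∀ r ∈ Finset.range n, (ω ∈ A r ↔ ∀ m < n,
          (∑ i ∈ Finset.range m, ((ξ ((r + i) % n) ω).1 : ℤ)) - (m : ℤ) ≠ -(k : ℤ)) := by
        intro r hr
        rw [hAmem r ω]
        have hr' : r ≤ n := (Finset.mem_range.1 hr).le
        have e1 : ∑ i ∈ Finset.range n, (ξ ((r + i) % n) ω).1 = n - k := by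
          rw [rot_sum n hn r hr' (fun i => (ξ i ω).1)]; exact htot
        have e2 : ∑ i ∈ Finset.range n, (ξ ((r + i) % n) ω).2 = k - 1 := by
          rw [rot_sum n hn r hr' (fun i => (ξ i ω).2)]; exact hmut
        exact ⟨fun h => h.1, fun h => ⟨h, e1, e2⟩⟩
      calc ∑ r ∈ Finset.range n, (A r).indicator (fun _ => (1 : ENNReal)) ω
          = ∑ r ∈ Finset.range n, (if (∀ m < n,
              (∑ i ∈ Finset.range m, ((ξ ((r + i) % n) ω).1 : ℤ)) - (m : ℤ) ≠ -(k : ℤ))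
            then (1 : ENNReal) else 0) := by
            refine Finset.sum_congr rfl fun r hr => ?_
            rw [Set.indicator_apply, if_congr (hmemA r hr) rfl rfl]
        _ = ((Finset.range n).filter (fun r => ∀ m < n,
              (∑ i ∈ Finset.range m, ((ξ ((r + i) % n) ω).1 : ℤ)) - (m : ℤ) ≠ -(k : ℤ))).card := by
            rw [Finset.sum_ite, Finset.sum_const, Finset.sum_const]
            simp
        _ = (k : ENNReal) := by
            rw [cycle_count n k hk1 hkn (fun i => (ξ i ω).1) htot]
    · rw [Set.indicator_of_notMem hω, mul_zero]
      refine Finset.sum_eq_zero fun r hr => ?_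
      refine Set.indicator_of_notMem (fun hin => hω ?_) _
      obtain ⟨_, h2, h3⟩ := (hAmem r ω).1 hin
      have hr' : r ≤ n := (Finset.mem_range.1 hr).le
      constructor
      · rw [← rot_sum n hn r hr' (fun i => (ξ i ω).1)]; exact h2
      · rw [← rot_sum n hn r hr' (fun i => (ξ i ω).2)]; exact h3
  -- summing
  have hsumA : ∑ r ∈ Finset.range n, P (A r) = (k : ENNReal) * P B := by
    calc ∑ r ∈ Finset.range n, P (A r)
        = ∑ r ∈ Finset.range n, ∫⁻ ω, (A r).indicator (fun _ => 1) ω ∂P :=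
          Finset.sum_congr rfl fun r _ => (lintegral_indicator_one (hAmeas r)).symm
      _ = ∫⁻ ω, ∑ r ∈ Finset.range n, (A r).indicator (fun _ => 1) ω ∂P :=
          (lintegral_finset_sum _ fun r _ => measurable_one.indicator (hAmeas r)).symm
      _ = ∫⁻ ω, (k : ENNReal) * B.indicator (fun _ => 1) ω ∂P :=
          lintegral_congr fun ω => hpoint ω
      _ = (k : ENNReal) * P B := by
          have h5 : ∫⁻ ω, (k : ENNReal) * B.indicator (fun _ => (1 : ENNReal)) ω ∂P
              = (k : ENNReal) * ∫⁻ ω, B.indicator (fun _ => (1 : ENNReal)) ω ∂P :=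
            lintegral_const_mul _ (measurable_one.indicator hBmeas)
          rw [h5]
          exact congrArg (fun z => (k : ENNReal) * z) (lintegral_indicator_one hBmeas)
  -- exchangeability
  have hginj : ∀ r : ℕ, Function.Injective (fun i : Fin n => (r + (i : ℕ)) % n) := by
    intro r i j h
    simp only at h
    have hmod : (i : ℕ) % n = (j : ℕ) % n := Nat.ModEq.add_left_cancel' r h
    rw [Nat.mod_eq_of_lt i.isLt, Nat.mod_eq_of_lt j.isLt] at hmod
    exact Fin.ext hmod
  have hAeq : ∀ r, P (A r) = P (A 0) := by
    intro r
    have h0 := joint_prob P ξ hmeas hindep hident n C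
      (fun i : Fin n => (r + (i : ℕ)) % n) (hginj r)
    have h1 := joint_prob P ξ hmeas hindep hident n C
      (fun i : Fin n => (0 + (i : ℕ)) % n) (hginj 0)
    exact h0.trans h1.symm
  have hfin : (n : ENNReal) * P (A 0) = (k : ENNReal) * P B := by
    rw [← hsumA, Finset.sum_congr rfl fun r _ => hAeq r, Finset.sum_const,
      Finset.card_range, nsmul_eq_mul]
  rw [hA0]
  show P (A 0) = ((k : ENNReal) / n) * P B
  have hne : (n : ENNReal) ≠ 0 := Nat.cast_ne_zero.2 hn0
  have htop : (n : ENNReal) ≠ ⊤ := ENNReal.natCast_ne_top n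
  have hrhs : ((k : ENNReal) / n) * P B = (n : ENNReal)⁻¹ * ((k : ENNReal) * P B) := by
    rw [div_eq_mul_inv]; ring
  rw [hrhs, ← hfin, ← mul_assoc, ENNReal.inv_mul_cancel hne htop, one_mul]
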